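/- arXiv:1708.06189 — 3 statements merged into one kernel-verified Lean document; each statement's English description precedes it below -/
import Mathlib

section
/- Under the Cramér condition φ(λ)=1 with φ', φ'' finite at λ, the product ∏_{j=1}^n φ(λ(n-j+1)/n) equals exp{-λIn}(1+O(1/n)) as n→∞, where I = ∫_0^1 ψ(u)du and ψ(u) = -(1/λ)log φ(λ(1-u)). In particular there is a constant C with ∏_{j=1}^n φ(λ(n-j+1)/n) ≤ C·exp{-λIn} for all n ≥ 1. -/
open Set

lemma aux_abs_exp_sub_one (x : ℝ) : |Real.exp x - 1| ≤ |x| * Real.exp |x| := by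
  have hme : Real.exp x * Real.exp (-x) = 1 := by rw [← Real.exp_add]; simp
  rcases le_or_gt 0 x with h | h
  · rw [abs_of_nonneg h, abs_of_nonneg (by nlinarith [Real.exp_pos x, Real.add_one_le_exp x] : (0:ℝ) ≤ Real.exp x - 1)]
    nlinarith [Real.add_one_le_exp (-x), Real.exp_pos x]
  · rw [abs_of_neg h, abs_of_nonpos (by nlinarith [Real.exp_le_one_iff.mpr h.le] : Real.exp x - 1 ≤ 0)]
    nlinarith [Real.add_one_le_exp x, Real.one_le_exp (by linarith : (0:ℝ) ≤ -x)]

lemma interval_est (g g1 : ℝ → ℝ) (M : ℝ) (hM0 : 0 ≤ M)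
    (hd1 : ∀ x ∈ Icc (0:ℝ) 1, HasDerivWithinAt g (g1 x) (Icc 0 1) x)
    (hLip : ∀ x ∈ Icc (0:ℝ) 1, ∀ y ∈ Icc (0:ℝ) 1, |g1 y - g1 x| ≤ M * |y - x|)
    (a b : ℝ) (hab : a ≤ b) (h0 : 0 ≤ a) (h1 : b ≤ 1) :
    |(∫ x in a..b, g x) - (b - a) * g b + g1 b * (b - a)^2 / 2| ≤ M * (b - a)^3 := by
  have hsub : Icc a b ⊆ Icc (0:ℝ) 1 := Icc_subset_Icc h0 (by linarith)
  have hbmem : b ∈ Icc (0:ℝ) 1 := ⟨by linarith, h1⟩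
  have hMba : 0 ≤ M * (b - a) := mul_nonneg hM0 (by linarith)
  -- Taylor-type bound
  have htay : ∀ x ∈ Icc a b, |g b - g x - g1 b * (b - x)| ≤ (M * (b - a)) * (b - a) := by
    intro x hx
    have hF : ∀ t ∈ Icc a b, HasDerivWithinAt (fun t => g t - g1 b * t) (g1 t - g1 b) (Icc a b) t := by
      intro t ht
      have := ((hd1 t (hsub ht)).mono hsub).sub (((hasDerivWithinAt_id t (Icc a b)).const_mul (g1 b)))
      exact this.congr_deriv (by ring)
    have hbound : ∀ t ∈ Icc a b, ‖g1 t - g1 b‖ ≤ M * (b - a) := by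
      intro t ht
      refine (hLip b hbmem t (hsub ht)).trans ?_
      have : |t - b| ≤ b - a := by
        rw [abs_sub_comm, abs_of_nonneg (by linarith [ht.2] : (0:ℝ) ≤ b - t)]; linarith [ht.1]
      exact mul_le_mul_of_nonneg_left this hM0
    have key := (convex_Icc a b).norm_image_sub_le_of_norm_hasDerivWithin_le hF hbound
      (right_mem_Icc.mpr hab) hx
    have h2 : |(g x - g1 b * x) - (g b - g1 b * b)| ≤ (M * (b - a)) * |x - b| := key
    calc |g b - g x - g1 b * (b - x)| = |(g x - g1 b * x) - (g b - g1 b * b)| := by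
          rw [← abs_neg]; ring_nf
      _ ≤ (M * (b - a)) * |x - b| := h2
      _ ≤ (M * (b - a)) * (b - a) := by
          apply mul_le_mul_of_nonneg_left _ hMba
          rw [abs_sub_comm, abs_of_nonneg (by linarith [hx.2] : (0:ℝ) ≤ b - x)]; linarith [hx.1]
  -- integrability
  have hgc : ContinuousOn g (Icc (0:ℝ) 1) := fun x hx => (hd1 x hx).differentiableWithinAt.continuousWithinAt
  have hint : IntervalIntegrable g MeasureTheory.volume a b :=
    (hgc.mono hsub).intervalIntegrable_of_Icc hab
  have hcl : Continuous (fun x : ℝ => g1 b * (b - x)) :=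
    continuous_const.mul (continuous_const.sub continuous_id')
  have hIr : |∫ x in a..b, (g b - g x - g1 b * (b - x))| ≤ (M * (b - a)) * (b - a) * |b - a| := by
    rw [← Real.norm_eq_abs]
    apply intervalIntegral.norm_integral_le_of_norm_le_const
    intro x hx
    rw [uIoc_of_le hab] at hx
    exact htay x (Ioc_subset_Icc_self hx)
  have hlin : (∫ x in a..b, (b - x)) = (b - a)^2 / 2 := by
    rw [intervalIntegral.integral_sub (continuous_const.intervalIntegrable a b)
        (continuous_id'.intervalIntegrable a b)]
    simp only [intervalIntegral.integral_const, integral_id, smul_eq_mul]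
    ring
  have hsplit : (∫ x in a..b, (g b - g x - g1 b * (b - x)))
      = (b - a) * g b - (∫ x in a..b, g x) - g1 b * ((b - a)^2 / 2) := by
    rw [intervalIntegral.integral_sub (intervalIntegrable_const.sub hint)
        (hcl.intervalIntegrable a b),
      intervalIntegral.integral_sub intervalIntegrable_const hint,
      intervalIntegral.integral_const, intervalIntegral.integral_const_mul, hlin,
      smul_eq_mul]
  rw [hsplit, abs_of_nonneg (by linarith : (0:ℝ) ≤ b - a)] at hIr
  calc |(∫ x in a..b, g x) - (b - a) * g b + g1 b * (b - a)^2 / 2|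
      = |(b - a) * g b - (∫ x in a..b, g x) - g1 b * ((b - a)^2 / 2)| := by
        rw [← abs_neg]; ring_nf
    _ ≤ (M * (b - a)) * (b - a) * (b - a) := hIr
    _ = M * (b - a)^3 := by ring

noncomputable def pt (n i : ℕ) : ℝ := (i : ℝ) / (n : ℝ)

lemma riemann_est (g g1 : ℝ → ℝ) (M : ℝ) (hM0 : 0 ≤ M)
    (hd1 : ∀ x ∈ Icc (0:ℝ) 1, HasDerivWithinAt g (g1 x) (Icc 0 1) x)
    (hg1c : ContinuousOn g1 (Icc (0:ℝ) 1))
    (hLip : ∀ x ∈ Icc (0:ℝ) 1, ∀ y ∈ Icc (0:ℝ) 1, |g1 y - g1 x| ≤ M * |y - x|)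
    (hg10 : (∫ x in (0:ℝ)..1, g1 x) = 0)
    (hIE : ∀ a b : ℝ, a ≤ b → 0 ≤ a → b ≤ 1 →
      |(∫ x in a..b, g x) - (b - a) * g b + g1 b * (b - a)^2 / 2| ≤ M * (b - a)^3)
    (n : ℕ) (hn : 1 ≤ n) :
    |(∑ i ∈ Finset.range n, g (pt n (i+1))) - n * ∫ x in (0:ℝ)..1, g x| ≤ 2 * M / n := by
  have hn0 : (0:ℝ) < n := by exact_mod_cast Nat.pos_of_ne_zero (by omega)
  have hgc : ContinuousOn g (Icc (0:ℝ) 1) :=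
    fun x hx => (hd1 x hx).differentiableWithinAt.continuousWithinAt
  -- basic facts about partition points
  have hple : ∀ i j : ℕ, i ≤ j → pt n i ≤ pt n j := by
    intro i j hij
    unfold pt
    gcongr
  have hp0 : ∀ i : ℕ, 0 ≤ pt n i := by
    intro i; unfold pt; positivity
  have hp1 : ∀ i : ℕ, i ≤ n → pt n i ≤ 1 := by
    intro i hi; unfold pt
    rw [div_le_one hn0]
    exact_mod_cast hi
  have hmem : ∀ i : ℕ, i ≤ n → pt n i ∈ Icc (0:ℝ) 1 := fun i hi => ⟨hp0 i, hp1 i hi⟩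
  have hdiff : ∀ i : ℕ, pt n (i+1) - pt n i = 1 / n := by
    intro i; unfold pt; push_cast; field_simp; ring
  -- integrability on pieces
  have hsubp : ∀ k : ℕ, k < n → Icc (pt n k) (pt n (k+1)) ⊆ Icc (0:ℝ) 1 := by
    intro k hk
    exact Icc_subset_Icc (hp0 k) (hp1 (k+1) (by omega))
  have hintg : ∀ k : ℕ, k < n → IntervalIntegrable g MeasureTheory.volume (pt n k) (pt n (k+1)) :=
    fun k hk => (hgc.mono (hsubp k hk)).intervalIntegrable_of_Icc (hple k (k+1) (by omega))
  have hintg1 : ∀ k : ℕ, k < n → IntervalIntegrable g1 MeasureTheory.volume (pt n k) (pt n (k+1)) :=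
    fun k hk => (hg1c.mono (hsubp k hk)).intervalIntegrable_of_Icc (hple k (k+1) (by omega))
  -- telescoping
  have hpt0 : pt n 0 = 0 := by unfold pt; simp
  have hptn : pt n n = 1 := by unfold pt; rw [div_self (ne_of_gt hn0)]
  have htelg : (∑ k ∈ Finset.range n, ∫ x in (pt n k)..(pt n (k+1)), g x) = ∫ x in (0:ℝ)..1, g x := by
    rw [intervalIntegral.sum_integral_adjacent_intervals hintg, hpt0, hptn]
  have htelg1 : (∑ k ∈ Finset.range n, ∫ x in (pt n k)..(pt n (k+1)), g1 x) = ∫ x in (0:ℝ)..1, g1 x := by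
    rw [intervalIntegral.sum_integral_adjacent_intervals hintg1, hpt0, hptn]
  set T := ∫ x in (0:ℝ)..1, g x with hT
  set A : ℕ → ℝ := fun k => ∫ x in (pt n k)..(pt n (k+1)), g x with hA
  set B : ℕ → ℝ := fun k => ∫ x in (pt n k)..(pt n (k+1)), g1 x with hB
  -- per-interval estimate for g
  have hAk : ∀ k, k < n → |g (pt n (k+1)) - n * A k - g1 (pt n (k+1)) / (2*n)| ≤ M / n^2 := by
    intro k hk
    have h := hIE (pt n k) (pt n (k+1)) (hple k (k+1) (by omega)) (hp0 k) (hp1 (k+1) (by omega))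
    rw [hdiff k] at h
    have heq : g (pt n (k+1)) - n * A k - g1 (pt n (k+1)) / (2*n)
        = -((n:ℝ) * (A k - (1/n) * g (pt n (k+1)) + g1 (pt n (k+1)) * (1/n)^2 / 2)) := by
      field_simp
      ring
    rw [heq, abs_neg, abs_mul, abs_of_pos hn0]
    calc (n:ℝ) * |A k - (1/n) * g (pt n (k+1)) + g1 (pt n (k+1)) * (1/n)^2 / 2|
        ≤ (n:ℝ) * (M * (1/n)^3) := mul_le_mul_of_nonneg_left h hn0.le
      _ = M / n^2 := by field_simp
  -- per-interval estimate for g1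
  have hBk : ∀ k, k < n → |g1 (pt n (k+1)) - n * B k| ≤ M / n := by
    intro k hk
    have hab : pt n k ≤ pt n (k+1) := hple k (k+1) (by omega)
    have hint2 : |∫ x in (pt n k)..(pt n (k+1)), (g1 (pt n (k+1)) - g1 x)|
        ≤ (M * (1/n)) * |pt n (k+1) - pt n k| := by
      rw [← Real.norm_eq_abs]
      apply intervalIntegral.norm_integral_le_of_norm_le_const
      intro x hx
      rw [uIoc_of_le hab] at hx
      have hxm : x ∈ Icc (0:ℝ) 1 := hsubp k hk (Ioc_subset_Icc_self hx)
      refine (hLip x hxm (pt n (k+1)) (hmem (k+1) (by omega))).trans ?_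
      apply mul_le_mul_of_nonneg_left _ hM0
      rw [abs_of_nonneg (by linarith [hx.2] : (0:ℝ) ≤ pt n (k+1) - x)]
      have := hx.1
      have := hdiff k
      linarith
    have hval : (∫ x in (pt n k)..(pt n (k+1)), (g1 (pt n (k+1)) - g1 x))
        = (1/n) * g1 (pt n (k+1)) - B k := by
      rw [intervalIntegral.integral_sub (continuous_const.intervalIntegrable _ _) (hintg1 k hk),
        intervalIntegral.integral_const, smul_eq_mul, hdiff k, mul_comm]
    rw [hval, hdiff k, abs_of_pos (by positivity : (0:ℝ) < 1/n)] at hint2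
    have heq2 : g1 (pt n (k+1)) - n * B k = (n:ℝ) * ((1/n) * g1 (pt n (k+1)) - B k) := by
      field_simp
    rw [heq2, abs_mul, abs_of_pos hn0]
    calc (n:ℝ) * |(1/n) * g1 (pt n (k+1)) - B k|
        ≤ (n:ℝ) * ((M * (1/n)) * (1/n)) := mul_le_mul_of_nonneg_left hint2 hn0.le
      _ = M / n := by field_simp
  -- bound on sum of g1 values
  have hsum1 : |∑ i ∈ Finset.range n, g1 (pt n (i+1))| ≤ M := by
    have heq : (∑ i ∈ Finset.range n, g1 (pt n (i+1)))
        = ∑ i ∈ Finset.range n, (g1 (pt n (i+1)) - n * B i) := by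
      rw [Finset.sum_sub_distrib, ← Finset.mul_sum, htelg1, hg10, mul_zero, sub_zero]
    rw [heq]
    calc |∑ i ∈ Finset.range n, (g1 (pt n (i+1)) - n * B i)|
        ≤ ∑ i ∈ Finset.range n, |g1 (pt n (i+1)) - n * B i| := Finset.abs_sum_le_sum_abs _ _
      _ ≤ ∑ _i ∈ Finset.range n, (M / n) :=
          Finset.sum_le_sum (fun i hi => hBk i (Finset.mem_range.mp hi))
      _ = n * (M / n) := by rw [Finset.sum_const, Finset.card_range, nsmul_eq_mul]
      _ = M := by field_simp
  -- main decomposition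
  have hmain : (∑ i ∈ Finset.range n, g (pt n (i+1))) - n * T
      = (∑ i ∈ Finset.range n, (g (pt n (i+1)) - n * A i - g1 (pt n (i+1)) / (2*n)))
        + (∑ i ∈ Finset.range n, g1 (pt n (i+1))) / (2*n) := by
    rw [Finset.sum_sub_distrib, Finset.sum_sub_distrib, ← Finset.mul_sum, htelg, ← Finset.sum_div]
    ring
  rw [hmain]
  have hE1 : |∑ i ∈ Finset.range n, (g (pt n (i+1)) - n * A i - g1 (pt n (i+1)) / (2*n))| ≤ M / n := by
    calc |∑ i ∈ Finset.range n, (g (pt n (i+1)) - n * A i - g1 (pt n (i+1)) / (2*n))|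
        ≤ ∑ i ∈ Finset.range n, |g (pt n (i+1)) - n * A i - g1 (pt n (i+1)) / (2*n)| :=
          Finset.abs_sum_le_sum_abs _ _
      _ ≤ ∑ _i ∈ Finset.range n, (M / n^2) :=
          Finset.sum_le_sum (fun i hi => hAk i (Finset.mem_range.mp hi))
      _ = n * (M / n^2) := by rw [Finset.sum_const, Finset.card_range, nsmul_eq_mul]
      _ = M / n := by field_simp
  have hE2 : |(∑ i ∈ Finset.range n, g1 (pt n (i+1))) / (2*n)| ≤ M / (2*n) := by
    rw [abs_div, abs_of_pos (by positivity : (0:ℝ) < 2*n)]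
    gcongr
  calc |(∑ i ∈ Finset.range n, (g (pt n (i+1)) - n * A i - g1 (pt n (i+1)) / (2*n)))
        + (∑ i ∈ Finset.range n, g1 (pt n (i+1))) / (2*n)|
      ≤ M / n + M / (2*n) := (abs_add_le _ _).trans (add_le_add hE1 hE2)
    _ ≤ 2 * M / n := by
        rw [div_add_div _ _ (ne_of_gt hn0) (by positivity : (2:ℝ)*n ≠ 0)]
        rw [div_le_div_iff₀ (by positivity) hn0]
        ring_nf
        nlinarith

theorem product_mgf_asymptotics (lam : ℝ) (hlam : 0 < lam) (φ : ℝ → ℝ)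
    (hpos : ∀ t ∈ Icc (0:ℝ) lam, 0 < φ t)
    (hsmooth : ContDiffOn ℝ 2 φ (Icc 0 lam))
    (hcramer : φ lam = 1) (hφ0 : φ 0 = 1)
    (ψ : ℝ → ℝ) (hψ : ∀ u, ψ u = -(1 / lam) * Real.log (φ (lam * (1 - u))))
    (I : ℝ) (hI : I = ∫ u in (0:ℝ)..1, ψ u) :
    (∃ C : ℝ, ∀ n : ℕ, 1 ≤ n →
      |(∏ j ∈ Finset.Icc 1 n, φ (lam * ((n : ℝ) - j + 1) / n)) * Real.exp (lam * I * n) - 1|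
        ≤ C / n)
    ∧ ∃ C : ℝ, ∀ n : ℕ, 1 ≤ n →
      (∏ j ∈ Finset.Icc 1 n, φ (lam * ((n : ℝ) - j + 1) / n)) ≤ C * Real.exp (-(lam * I * n)) := by
  set g : ℝ → ℝ := fun u => Real.log (φ (lam * u)) with hgdef
  have hmaps : MapsTo (fun u : ℝ => lam * u) (Icc 0 1) (Icc 0 lam) := by
    intro x hx
    exact ⟨mul_nonneg hlam.le hx.1, mul_le_of_le_one_right hlam.le hx.2⟩
  have hφc : ContDiffOn ℝ 2 (fun u : ℝ => φ (lam * u)) (Icc 0 1) :=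
    hsmooth.comp ((contDiff_const.mul contDiff_id).contDiffOn) hmaps
  have hgsm : ContDiffOn ℝ 2 g (Icc 0 1) :=
    hφc.log (fun x hx => (hpos _ (hmaps hx)).ne')
  have hu : UniqueDiffOn ℝ (Icc (0:ℝ) 1) := uniqueDiffOn_Icc one_pos
  set g1 : ℝ → ℝ := derivWithin g (Icc 0 1) with hg1def
  set g2 : ℝ → ℝ := derivWithin g1 (Icc 0 1) with hg2def
  have hg1sm : ContDiffOn ℝ 1 g1 (Icc 0 1) := hgsm.derivWithin hu (by norm_num)
  have hg2c : ContinuousOn g2 (Icc (0:ℝ) 1) :=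
    (hg1sm.derivWithin hu (by norm_num) : ContDiffOn ℝ 0 g2 (Icc 0 1)).continuousOn
  have hd1 : ∀ x ∈ Icc (0:ℝ) 1, HasDerivWithinAt g (g1 x) (Icc 0 1) x :=
    fun x hx => ((hgsm.differentiableOn (by norm_num)) x hx).hasDerivWithinAt
  have hd2 : ∀ x ∈ Icc (0:ℝ) 1, HasDerivWithinAt g1 (g2 x) (Icc 0 1) x :=
    fun x hx => ((hg1sm.differentiableOn (by norm_num)) x hx).hasDerivWithinAt
  have hg1c : ContinuousOn g1 (Icc (0:ℝ) 1) := hg1sm.continuousOn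
  obtain ⟨M0, hM0b⟩ := isCompact_Icc.exists_bound_of_continuousOn hg2c
  set M : ℝ := max M0 0 with hMdef
  have hM0 : 0 ≤ M := le_max_right _ _
  have hM : ∀ x ∈ Icc (0:ℝ) 1, ‖g2 x‖ ≤ M := fun x hx => (hM0b x hx).trans (le_max_left _ _)
  have hLip : ∀ x ∈ Icc (0:ℝ) 1, ∀ y ∈ Icc (0:ℝ) 1, |g1 y - g1 x| ≤ M * |y - x| := by
    intro x hx y hy
    have := (convex_Icc (0:ℝ) 1).norm_image_sub_le_of_norm_hasDerivWithin_le hd2 hM hx hy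
    simpa [Real.norm_eq_abs] using this
  have hg1v : g 1 = 0 := by rw [hgdef]; simp only [mul_one, hcramer, Real.log_one]
  have hg0v : g 0 = 0 := by rw [hgdef]; simp only [mul_zero, hφ0, Real.log_one]
  have hg1int : IntervalIntegrable g1 MeasureTheory.volume 0 1 :=
    hg1c.intervalIntegrable_of_Icc zero_le_one
  have hg10 : (∫ x in (0:ℝ)..1, g1 x) = 0 := by
    rw [intervalIntegral.integral_eq_sub_of_hasDeriv_right_of_le zero_le_one hgsm.continuousOn
      (fun x hx => ((hd1 x (Ioo_subset_Icc_self hx)).hasDerivAt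
        (Icc_mem_nhds hx.1 hx.2)).hasDerivWithinAt) hg1int, hg1v, hg0v, sub_zero]
  set T := ∫ x in (0:ℝ)..1, g x with hT
  have hlamI : lam * I = -T := by
    have h1 : (∫ u in (0:ℝ)..1, ψ u) = -(1/lam) * ∫ u in (0:ℝ)..1, g (1 - u) := by
      rw [← intervalIntegral.integral_const_mul]
      apply intervalIntegral.integral_congr
      intro u _
      rw [hψ u]
    have h2 : (∫ u in (0:ℝ)..1, g (1 - u)) = T := by
      rw [intervalIntegral.integral_comp_sub_left g 1]
      norm_num
      rfl
    rw [hI, h1, h2]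
    field_simp
  -- main Riemann sum estimate
  have hkey : ∀ n : ℕ, 1 ≤ n →
      |(∑ i ∈ Finset.range n, g (pt n (i+1))) - n * T| ≤ 2 * M / n := by
    intro n hn
    exact riemann_est g g1 M hM0 hd1 hg1c hLip hg10
      (fun a b h1 h2 h3 => interval_est g g1 M hM0 hd1 hLip a b h1 h2 h3) n hn
  -- product identity
  have hPn : ∀ n : ℕ, 1 ≤ n →
      (∏ j ∈ Finset.Icc 1 n, φ (lam * ((n : ℝ) - j + 1) / n))
        = Real.exp (∑ i ∈ Finset.range n, g (pt n (i+1))) := by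
    intro n hn
    have hn0 : (0:ℝ) < n := by exact_mod_cast Nat.pos_of_ne_zero (by omega)
    have hre : (∏ j ∈ Finset.Icc 1 n, φ (lam * ((n : ℝ) - j + 1) / n))
        = ∏ i ∈ Finset.range n, φ (lam * ((i:ℝ) + 1) / n) := by
      rw [← Finset.Ico_add_one_right_eq_Icc, Finset.prod_Ico_eq_prod_range]
      rw [← Finset.prod_range_reflect (fun i => φ (lam * ((i:ℝ) + 1) / n)) n]
      apply Finset.prod_congr rfl
      intro i hi
      have hi' : i < n := Finset.mem_range.mp hi
      have hc : ((n - 1 - i : ℕ) : ℝ) = (n:ℝ) - 1 - i := by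
        rw [Nat.cast_sub (by omega), Nat.cast_sub (by omega)]
        push_cast
        ring
      rw [hc]
      push_cast
      ring_nf
    rw [hre, Real.exp_sum]
    apply Finset.prod_congr rfl
    intro i hi
    have hi' : i < n := Finset.mem_range.mp hi
    have hptv : pt n (i+1) = ((i:ℝ) + 1) / n := by unfold pt; push_cast; ring
    have hmem : lam * ((i:ℝ) + 1) / n ∈ Icc (0:ℝ) lam := by
      constructor
      · positivity
      · rw [mul_div_assoc]
        apply mul_le_of_le_one_right hlam.le
        rw [div_le_one hn0]
        exact_mod_cast hi'
    rw [hgdef]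
    simp only [hptv]
    rw [← Real.exp_log (hpos _ hmem), mul_div_assoc]
  -- final assembly
  constructor
  · refine ⟨2 * M * Real.exp (2 * M), ?_⟩
    intro n hn
    have hn0 : (0:ℝ) < n := by exact_mod_cast Nat.pos_of_ne_zero (by omega)
    have hn1 : (1:ℝ) ≤ n := by exact_mod_cast hn
    set S := ∑ i ∈ Finset.range n, g (pt n (i+1)) with hS
    have hD : |S - n * T| ≤ 2 * M / n := hkey n hn
    have hDM : |S - n * T| ≤ 2 * M := hD.trans (div_le_self (by positivity) hn1)
    have hexp : (∏ j ∈ Finset.Icc 1 n, φ (lam * ((n : ℝ) - j + 1) / n)) * Real.exp (lam * I * n)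
        = Real.exp (S - n * T) := by
      rw [hPn n hn, hlamI, ← Real.exp_add]
      congr 1
      ring
    rw [hexp]
    calc |Real.exp (S - n * T) - 1| ≤ |S - n * T| * Real.exp |S - n * T| :=
          aux_abs_exp_sub_one _
      _ ≤ (2 * M / n) * Real.exp (2 * M) := by
          apply mul_le_mul hD (Real.exp_le_exp.mpr hDM) (Real.exp_pos _).le (by positivity)
      _ = 2 * M * Real.exp (2 * M) / n := by ring
  · refine ⟨Real.exp (2 * M), ?_⟩
    intro n hn
    have hn0 : (0:ℝ) < n := by exact_mod_cast Nat.pos_of_ne_zero (by omega)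
    have hn1 : (1:ℝ) ≤ n := by exact_mod_cast hn
    set S := ∑ i ∈ Finset.range n, g (pt n (i+1)) with hS
    have hD : |S - n * T| ≤ 2 * M / n := hkey n hn
    have hDM : |S - n * T| ≤ 2 * M := hD.trans (div_le_self (by positivity) hn1)
    rw [hPn n hn, ← Real.exp_add]
    apply Real.exp_le_exp.mpr
    have h1 : S - n * T ≤ 2 * M := (le_abs_self _).trans hDM
    have h2 : -(lam * I * n) = n * T := by rw [hlamI]; ring
    rw [h2]
    linarith
end

section
/- Let λ, I > 0. There exists a constant C such that for all x ≥ 1, ∑_{n=1}^∞ exp{-λx/n - λIn} ≤ C·x^{1/4}·exp{-2λ√(Ix)}. -/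
open Real Finset


lemma summable_gauss (a : ℝ) (ha : 0 < a) :
    Summable (fun k : ℕ => Real.exp (-(a * (k:ℝ)^2))) := by
  apply Summable.of_nonneg_of_le (f := fun k : ℕ => Real.exp (-a) ^ k)
    (fun k => (Real.exp_pos _).le) (fun k => ?_)
    (summable_geometric_of_lt_one (Real.exp_pos _).le (Real.exp_lt_one_iff.mpr (by linarith)))
  show Real.exp (-(a * (k:ℝ)^2)) ≤ Real.exp (-a) ^ k
  rw [← Real.exp_nat_mul, Real.exp_le_exp]
  have hk : (k:ℝ) ≤ (k:ℝ)^2 := by exact_mod_cast Nat.le_self_pow two_ne_zero k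
  nlinarith [ha]

set_option maxHeartbeats 1000000 in
lemma gauss_bound (a : ℝ) (ha : 0 < a) :
    (∑' k : ℕ, Real.exp (-(a * (k:ℝ)^2))) ≤ 3 + 2 / Real.sqrt a := by
  have hsa : 0 < Real.sqrt a := Real.sqrt_pos.mpr ha
  set K : ℕ := ⌈1 / Real.sqrt a⌉₊ with hK
  have hsum := summable_gauss a ha
  rw [← Summable.sum_add_tsum_nat_add (K + 1) hsum]
  have h1 : ∑ k ∈ range (K + 1), Real.exp (-(a * (k:ℝ)^2)) ≤ 1 / Real.sqrt a + 2 := by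
    calc ∑ k ∈ range (K + 1), Real.exp (-(a * (k:ℝ)^2))
        ≤ ∑ _k ∈ range (K + 1), 1 := by
          apply Finset.sum_le_sum
          intro k _
          rw [← Real.exp_zero, Real.exp_le_exp]
          nlinarith [sq_nonneg (k:ℝ)]
      _ = (K:ℝ) + 1 := by simp
      _ ≤ 1 / Real.sqrt a + 2 := by
          have := Nat.ceil_lt_add_one (by positivity : (0:ℝ) ≤ 1 / Real.sqrt a)
          rw [← hK] at this
          linarith
  have h2 : (∑' j : ℕ, Real.exp (-(a * ((j + (K+1) : ℕ):ℝ)^2))) ≤ 1 / Real.sqrt a := by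
    have hr : Real.exp (-Real.sqrt a) < 1 := Real.exp_lt_one_iff.mpr (by linarith)
    have hr0 : (0:ℝ) ≤ Real.exp (-Real.sqrt a) := (Real.exp_pos _).le
    have key : ∀ j : ℕ, Real.exp (-(a * ((j + (K+1) : ℕ):ℝ)^2))
        ≤ Real.exp (-Real.sqrt a) ^ (j+1) := by
      intro j
      rw [← Real.exp_nat_mul, Real.exp_le_exp]
      push_cast
      have hK1 : 1 / Real.sqrt a ≤ (K:ℝ) + 1 := by
        have := Nat.le_ceil (1 / Real.sqrt a); rw [← hK] at this; linarith
      have haK : Real.sqrt a ≤ a * ((K:ℝ) + 1) := by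
        rw [div_le_iff₀ hsa] at hK1
        have hsq : Real.sqrt a * Real.sqrt a = a := Real.mul_self_sqrt ha.le
        nlinarith
      have hfac : ((j:ℝ) + 1) * ((K:ℝ) + 1) ≤ ((j:ℝ) + ((K:ℝ)+1))^2 := by
        nlinarith [Nat.cast_nonneg (α := ℝ) j, Nat.cast_nonneg (α := ℝ) K]
      have : ((j:ℝ)+1) * Real.sqrt a ≤ a * ((j:ℝ) + ((K:ℝ)+1))^2 := by
        calc ((j:ℝ)+1) * Real.sqrt a ≤ ((j:ℝ)+1) * (a * ((K:ℝ)+1)) := by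
              apply mul_le_mul_of_nonneg_left haK (by positivity)
          _ = a * (((j:ℝ)+1) * ((K:ℝ)+1)) := by ring
          _ ≤ a * ((j:ℝ) + ((K:ℝ)+1))^2 := by nlinarith
      nlinarith
    have hgeo : Summable (fun j : ℕ => Real.exp (-Real.sqrt a) ^ (j+1)) :=
      ((summable_geometric_of_lt_one hr0 hr).mul_right _).congr
        (fun j => by rw [pow_succ])
    calc (∑' j : ℕ, Real.exp (-(a * ((j + (K+1) : ℕ):ℝ)^2)))
        ≤ ∑' j : ℕ, Real.exp (-Real.sqrt a) ^ (j+1) :=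
          Summable.tsum_le_tsum key ((summable_nat_add_iff (K+1)).mpr hsum) hgeo
      _ = (∑' j : ℕ, Real.exp (-Real.sqrt a) ^ j) * Real.exp (-Real.sqrt a) := by
          rw [← tsum_mul_right]
          exact tsum_congr fun j => (pow_succ _ _)
      _ = (1 - Real.exp (-Real.sqrt a))⁻¹ * Real.exp (-Real.sqrt a) := by
          rw [tsum_geometric_of_lt_one hr0 hr]
      _ ≤ 1 / Real.sqrt a := by
          set r := Real.exp (-Real.sqrt a) with hrdef
          have h1r : 0 < 1 - r := by linarith
          rw [inv_mul_eq_div, div_le_div_iff₀ h1r hsa]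
          have hE : Real.sqrt a + 1 ≤ Real.exp (Real.sqrt a) := Real.add_one_le_exp _
          have hrE : r * Real.exp (Real.sqrt a) = 1 := by
            rw [hrdef, ← Real.exp_add]; simp
          have hEpos : (0:ℝ) < Real.exp (Real.sqrt a) := Real.exp_pos _
          nlinarith
  have hdd : 2 / Real.sqrt a = 1 / Real.sqrt a + 1 / Real.sqrt a := by ring
  linarith


set_option maxHeartbeats 1000000 in
lemma shifted_partial (a t : ℝ) (ha : 0 < a) (ht : 0 < t) (M : ℕ) :
    ∑ n ∈ range M, Real.exp (-(a * ((n:ℝ) + 1 - t)^2))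
      ≤ 1 + 2 * (∑' k : ℕ, Real.exp (-(a * (k:ℝ)^2))) := by
  have hsum := summable_gauss a ha
  set G := ∑' k : ℕ, Real.exp (-(a * (k:ℝ)^2)) with hG
  obtain ⟨N, hN⟩ : ∃ N : ℕ, N = ⌈t⌉₊ := ⟨_, rfl⟩
  have hN1 : 1 ≤ N := by
    rw [hN]; exact Nat.one_le_iff_ne_zero.mpr (by simp [Nat.ceil_eq_zero, not_le, ht])
  have htN : t ≤ (N:ℝ) := hN ▸ Nat.le_ceil t
  have hNt : (N:ℝ) < t + 1 := hN ▸ Nat.ceil_lt_add_one ht.le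
  obtain ⟨M', hM'⟩ : ∃ m : ℕ, m = max M N := ⟨_, rfl⟩
  have hMM' : M ≤ M' := hM' ▸ le_max_left _ _
  have hNM' : N ≤ M' := hM' ▸ le_max_right _ _
  have hstep1 : ∑ n ∈ range M, Real.exp (-(a * ((n:ℝ) + 1 - t)^2))
      ≤ ∑ n ∈ range M', Real.exp (-(a * ((n:ℝ) + 1 - t)^2)) := by
    apply Finset.sum_le_sum_of_subset_of_nonneg (Finset.range_subset_range.mpr hMM')
    intro i _ _; exact (Real.exp_pos _).le
  have hsplit : ∑ n ∈ range M', Real.exp (-(a * ((n:ℝ) + 1 - t)^2))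
      = ∑ n ∈ range N, Real.exp (-(a * ((n:ℝ) + 1 - t)^2))
        + ∑ n ∈ Ico N M', Real.exp (-(a * ((n:ℝ) + 1 - t)^2)) := by
    simp only [Finset.range_eq_Ico]
    exact (Finset.sum_Ico_consecutive _ (Nat.zero_le N) hNM').symm
  -- Part A
  have hA : ∑ n ∈ range N, Real.exp (-(a * ((n:ℝ) + 1 - t)^2)) ≤ 1 + G := by
    have hpt : ∀ n ∈ range N, Real.exp (-(a * ((n:ℝ) + 1 - t)^2))
        ≤ Real.exp (-(a * ((N - 2 - n : ℕ):ℝ)^2)) := by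
      intro n hn
      rw [Finset.mem_range] at hn
      rw [Real.exp_le_exp]
      rcases le_or_gt (n + 2) N with h | h
      · have hcast : ((N - 2 - n : ℕ):ℝ) = (N:ℝ) - 2 - n := by
          have e : N - 2 - n = N - (2 + n) := by omega
          rw [e, Nat.cast_sub (by omega)]
          push_cast; ring
        have hub : (N:ℝ) - 2 - n ≤ t - ((n:ℝ) + 1) := by linarith
        have hnn : (0:ℝ) ≤ (N:ℝ) - 2 - n := by
          rw [← hcast]; positivity
        rw [hcast]
        have hsq : ((N:ℝ) - 2 - n)^2 ≤ ((n:ℝ) + 1 - t)^2 := by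
          have := pow_le_pow_left₀ hnn hub 2
          nlinarith
        nlinarith
      · have e : N - 2 - n = 0 := by omega
        rw [e]
        push_cast
        nlinarith [sq_nonneg ((n:ℝ) + 1 - t)]
    calc ∑ n ∈ range N, Real.exp (-(a * ((n:ℝ) + 1 - t)^2))
        ≤ ∑ n ∈ range N, Real.exp (-(a * ((N - 2 - n : ℕ):ℝ)^2)) :=
          Finset.sum_le_sum hpt
      _ = ∑ j ∈ range N, Real.exp (-(a * ((j - 1 : ℕ):ℝ)^2)) := by
          rw [← Finset.sum_range_reflect (fun j => Real.exp (-(a * ((j - 1 : ℕ):ℝ)^2))) N]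
          apply Finset.sum_congr rfl
          intro n hn
          have e : N - 2 - n = N - 1 - n - 1 := by omega
          rw [e]
      _ ≤ 1 + G := by
          obtain ⟨K, rfl⟩ : ∃ K, N = K + 1 := ⟨N - 1, by omega⟩
          rw [Finset.sum_range_succ']
          have h0 : Real.exp (-(a * ((0 - 1 : ℕ):ℝ)^2)) = 1 := by norm_num
          rw [h0]
          have e : ∑ j ∈ range K, Real.exp (-(a * ((j + 1 - 1 : ℕ):ℝ)^2))
              = ∑ j ∈ range K, Real.exp (-(a * ((j:ℕ):ℝ)^2)) := by
            apply Finset.sum_congr rfl; intro j _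
            rw [Nat.add_sub_cancel]
          rw [e, add_comm]
          gcongr
          exact Summable.sum_le_tsum (range K) (fun k _ => (Real.exp_pos _).le) hsum
  -- Part B
  have hB : ∑ n ∈ Ico N M', Real.exp (-(a * ((n:ℝ) + 1 - t)^2)) ≤ G := by
    have hpt : ∀ n ∈ Ico N M', Real.exp (-(a * ((n:ℝ) + 1 - t)^2))
        ≤ Real.exp (-(a * ((n - N : ℕ):ℝ)^2)) := by
      intro n hn
      rw [Finset.mem_Ico] at hn
      rw [Real.exp_le_exp]
      have hcast : ((n - N : ℕ):ℝ) = (n:ℝ) - N := by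
        rw [Nat.cast_sub hn.1]
      have h1 : ((n:ℝ) - N) ≤ (n:ℝ) + 1 - t := by linarith
      have h2 : (0:ℝ) ≤ (n:ℝ) - N := by rw [← hcast]; positivity
      rw [hcast]
      have hsq : ((n:ℝ) - N)^2 ≤ ((n:ℝ) + 1 - t)^2 := pow_le_pow_left₀ h2 h1 2
      nlinarith
    calc ∑ n ∈ Ico N M', Real.exp (-(a * ((n:ℝ) + 1 - t)^2))
        ≤ ∑ n ∈ Ico N M', Real.exp (-(a * ((n - N : ℕ):ℝ)^2)) :=
          Finset.sum_le_sum hpt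
      _ = ∑ j ∈ range (M' - N), Real.exp (-(a * ((j:ℕ):ℝ)^2)) := by
          rw [Finset.sum_Ico_eq_sum_range]
          apply Finset.sum_congr rfl
          intro j _
          rw [Nat.add_sub_cancel_left]
      _ ≤ G := Summable.sum_le_tsum (range (M' - N)) (fun k _ => (Real.exp_pos _).le) hsum
  linarith


set_option maxHeartbeats 1000000 in
theorem series_estimate (lam I : ℝ) (hlam : 0 < lam) (hI : 0 < I) :
    ∃ C : ℝ, ∀ x : ℝ, 1 ≤ x →
      (∑' n : ℕ, Real.exp (-(lam * x / (n + 1)) - lam * I * (n + 1)))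
        ≤ C * x ^ ((1 : ℝ) / 4) * Real.exp (-(2 * lam * Real.sqrt (I * x))) := by
  set r2 : ℝ := Real.exp (-(lam * I / 4)) with hr2def
  have hr2pos : 0 < r2 := Real.exp_pos _
  have hr2lt : r2 < 1 := Real.exp_lt_one_iff.mpr (by nlinarith [mul_pos hlam hI])
  have h1r2 : 0 < 1 - r2 := by linarith
  refine ⟨7 + (1 - r2)⁻¹ + 4 * (Real.sqrt 2 / (Real.sqrt (lam * I) * I ^ ((1:ℝ)/4)))
      + 4 * (Real.sqrt 2 / Real.sqrt (lam * I)), ?_⟩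
  intro x hx
  have hx0 : 0 < x := by linarith
  set t : ℝ := Real.sqrt (x / I) with htdef
  have ht : 0 < t := Real.sqrt_pos.mpr (by positivity)
  set s : ℝ := Real.sqrt (I * x) with hsdef
  have hs : 0 < s := Real.sqrt_pos.mpr (by positivity)
  have hIt : I * t = s := by
    rw [htdef, hsdef, ← Real.sqrt_sq hI.le, ← Real.sqrt_mul (by positivity)]
    congr 1
    field_simp
    ring
    rw [Real.sq_sqrt (by positivity)]
  have ht2 : t ^ 2 = x / I := Real.sq_sqrt (by positivity)
  set a : ℝ := lam * I / (2 * t + 2) with hadef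
  have ha : 0 < a := by positivity
  -- key pointwise identity and bound
  have hkey : ∀ n : ℕ, Real.exp (-(lam * x / ((n:ℝ) + 1)) - lam * I * ((n:ℝ) + 1))
      ≤ Real.exp (-(2 * lam * s)) *
        (Real.exp (-(a * ((n:ℝ) + 1 - t)^2)) + Real.exp (-(lam * I / 4 * ((n:ℝ) + 1)))) := by
    intro n
    set m : ℝ := (n:ℝ) + 1 with hmdef
    have hm : (1:ℝ) ≤ m := by simp [hmdef]
    have hm0 : 0 < m := by linarith
    have hIt2 : I * t^2 = x := by rw [ht2]; field_simp
    have hexp : lam * I * (m - t)^2 / m = lam * (I * m - 2 * s + x / m) := by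
      have expand : I * (m - t)^2 = I * m * m - 2 * s * m + x := by
        linear_combination (-2*m) * hIt + hIt2
      have hfrac : I * (m - t)^2 / m = I * m - 2 * s + x / m := by
        field_simp
        linear_combination expand
      rw [mul_assoc, mul_div_assoc, hfrac]
    have hiden : -(lam * x / m) - lam * I * m
        = -(2 * lam * s) + -(lam * I * (m - t)^2 / m) := by
      rw [hexp]
      field_simp
      ring
    rw [hiden, Real.exp_add, mul_le_mul_iff_of_pos_left (Real.exp_pos _)]
    rcases le_or_gt m (2 * t + 2) with hc | hc
    · have hle : a * (m - t)^2 ≤ lam * I * (m - t)^2 / m := by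
        rw [hadef, div_mul_eq_mul_div, div_le_div_iff₀ (by positivity) hm0]
        nlinarith [mul_nonneg (by linarith : (0:ℝ) ≤ 2*t+2-m)
          (by positivity : (0:ℝ) ≤ lam * I * (m-t)^2)]
      calc Real.exp (-(lam * I * (m - t)^2 / m)) ≤ Real.exp (-(a * (m - t)^2)) :=
            Real.exp_le_exp.mpr (by linarith)
        _ ≤ _ := le_add_of_nonneg_right (Real.exp_pos _).le
    · have hle : lam * I / 4 * m ≤ lam * I * (m - t)^2 / m := by
        rw [le_div_iff₀ hm0]
        have h1 : 0 < m/2 - t := by linarith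
        have h2 : 0 < m - t + m/2 := by linarith
        nlinarith [mul_nonneg (mul_pos hlam hI).le (mul_pos h1 h2).le]
      calc Real.exp (-(lam * I * (m - t)^2 / m)) ≤ Real.exp (-(lam * I / 4 * m)) :=
            Real.exp_le_exp.mpr (by linarith)
        _ ≤ _ := le_add_of_nonneg_left (Real.exp_pos _).le
  -- abbreviations
  have hG := gauss_bound a ha
  have hsa : 0 < Real.sqrt a := Real.sqrt_pos.mpr ha
  set X : ℝ := x ^ ((1:ℝ)/4) with hXdef
  have hX1 : (1:ℝ) ≤ X := Real.one_le_rpow hx (by norm_num)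
  have hXpos : 0 < X := by linarith
  -- geometric partial sums
  have hgeo : ∀ M : ℕ, ∑ n ∈ range M, Real.exp (-(lam * I / 4 * ((n:ℝ) + 1))) ≤ (1 - r2)⁻¹ := by
    intro M
    have hpt : ∀ n : ℕ, Real.exp (-(lam * I / 4 * ((n:ℝ) + 1))) ≤ r2 ^ n := by
      intro n
      rw [hr2def, ← Real.exp_nat_mul, Real.exp_le_exp]
      have hc : (0:ℝ) ≤ lam * I / 4 := by positivity
      have hn : (0:ℝ) ≤ (n:ℝ) := Nat.cast_nonneg n
      nlinarith
    calc ∑ n ∈ range M, Real.exp (-(lam * I / 4 * ((n:ℝ) + 1)))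
        ≤ ∑ n ∈ range M, r2 ^ n := Finset.sum_le_sum fun n _ => hpt n
      _ ≤ ∑' n : ℕ, r2 ^ n := Summable.sum_le_tsum _ (fun n _ => by positivity)
          (summable_geometric_of_lt_one hr2pos.le hr2lt)
      _ = (1 - r2)⁻¹ := tsum_geometric_of_lt_one hr2pos.le hr2lt
  -- sqrt computations
  have h_sqrt_t : Real.sqrt t = X / I ^ ((1:ℝ)/4) := by
    rw [htdef, Real.sqrt_eq_rpow, Real.sqrt_eq_rpow, ← Real.rpow_mul (by positivity)]
    norm_num
    rw [Real.div_rpow hx0.le hI.le]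
  have h1a : 1 / Real.sqrt a = Real.sqrt (2*t+2) / Real.sqrt (lam*I) := by
    rw [hadef, Real.sqrt_div (by positivity), one_div_div]
  have hsq2t2 : Real.sqrt (2*t+2) ≤ Real.sqrt 2 * Real.sqrt t + Real.sqrt 2 := by
    have e : 2*t+2 = 2*(t+1) := by ring
    rw [e, Real.sqrt_mul (by norm_num)]
    have h2 : Real.sqrt (t+1) ≤ Real.sqrt t + 1 := by
      have hle : t + 1 ≤ (Real.sqrt t + 1)^2 := by
        nlinarith [Real.sq_sqrt ht.le, Real.sqrt_nonneg t]
      calc Real.sqrt (t+1) ≤ Real.sqrt ((Real.sqrt t + 1)^2) := Real.sqrt_le_sqrt hle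
        _ = Real.sqrt t + 1 := Real.sqrt_sq (by positivity)
    nlinarith [Real.sqrt_nonneg 2]
  have hsl : 0 < Real.sqrt (lam*I) := Real.sqrt_pos.mpr (by positivity)
  have hI4 : 0 < I ^ ((1:ℝ)/4) := Real.rpow_pos_of_pos hI _
  have key4 : 1 / Real.sqrt a
      ≤ Real.sqrt 2 / (Real.sqrt (lam*I) * I ^ ((1:ℝ)/4)) * X + Real.sqrt 2 / Real.sqrt (lam*I) * X := by
    calc 1 / Real.sqrt a = Real.sqrt (2*t+2) / Real.sqrt (lam*I) := h1a
      _ ≤ (Real.sqrt 2 * Real.sqrt t + Real.sqrt 2) / Real.sqrt (lam*I) := by gcongr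
      _ = Real.sqrt 2 / (Real.sqrt (lam*I) * I ^ ((1:ℝ)/4)) * X + Real.sqrt 2 / Real.sqrt (lam*I) := by
          rw [h_sqrt_t]
          field_simp
      _ ≤ _ := by
          have : Real.sqrt 2 / Real.sqrt (lam*I) ≤ Real.sqrt 2 / Real.sqrt (lam*I) * X :=
            le_mul_of_one_le_right (by positivity) hX1
          linarith
  have hB : 1 + 2 * (3 + 2 / Real.sqrt a) + (1 - r2)⁻¹
      ≤ (7 + (1 - r2)⁻¹ + 4 * (Real.sqrt 2 / (Real.sqrt (lam * I) * I ^ ((1:ℝ)/4)))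
        + 4 * (Real.sqrt 2 / Real.sqrt (lam * I))) * X := by
    have hdd : 2 / Real.sqrt a = 2 * (1 / Real.sqrt a) := by ring
    have h7 : (7:ℝ) ≤ 7 * X := by linarith
    have hir : (1 - r2)⁻¹ ≤ (1 - r2)⁻¹ * X := le_mul_of_one_le_right (by positivity) hX1
    nlinarith [key4]
  -- assemble
  apply Real.tsum_le_of_sum_range_le (fun n => (Real.exp_pos _).le)
  intro M
  calc ∑ n ∈ range M, Real.exp (-(lam * x / ((n:ℝ) + 1)) - lam * I * ((n:ℝ) + 1))
      ≤ ∑ n ∈ range M, Real.exp (-(2 * lam * s)) *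
          (Real.exp (-(a * ((n:ℝ) + 1 - t)^2)) + Real.exp (-(lam * I / 4 * ((n:ℝ) + 1)))) :=
        Finset.sum_le_sum fun n _ => hkey n
    _ = Real.exp (-(2 * lam * s)) *
          ((∑ n ∈ range M, Real.exp (-(a * ((n:ℝ) + 1 - t)^2)))
            + ∑ n ∈ range M, Real.exp (-(lam * I / 4 * ((n:ℝ) + 1)))) := by
        rw [← Finset.mul_sum, Finset.sum_add_distrib]
    _ ≤ Real.exp (-(2 * lam * s)) *
          ((7 + (1 - r2)⁻¹ + 4 * (Real.sqrt 2 / (Real.sqrt (lam * I) * I ^ ((1:ℝ)/4)))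
            + 4 * (Real.sqrt 2 / Real.sqrt (lam * I))) * X) := by
        apply mul_le_mul_of_nonneg_left _ (Real.exp_pos _).le
        have hS1 : ∑ n ∈ range M, Real.exp (-(a * ((n:ℝ) + 1 - t)^2))
            ≤ 1 + 2 * (∑' k : ℕ, Real.exp (-(a * (k:ℝ)^2))) := shifted_partial a t ha ht M
        have hS2 := hgeo M
        have h2G : (∑' k : ℕ, Real.exp (-(a * (k:ℝ)^2))) ≤ 3 + 2 / Real.sqrt a := hG
        linarith
    _ = (7 + (1 - r2)⁻¹ + 4 * (Real.sqrt 2 / (Real.sqrt (lam * I) * I ^ ((1:ℝ)/4)))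
          + 4 * (Real.sqrt 2 / Real.sqrt (lam * I))) * X * Real.exp (-(2 * lam * s)) := by
        ring
end

section
/- Let f_t and f̂_{1-t} be the two-dimensional centered Gaussian densities with covariance matrices Σ_t = [[∫_0^t σ²(u)du, ∫_0^t σ²(u)(t-u)du],[∫_0^t σ²(u)(t-u)du, ∫_0^t σ²(u)(t-u)²du]] and Σ̂_{1-t} = [[∫_t^1 σ²(u)du, ∫_t^1 σ²(u)(u-t)du],[∫_t^1 σ²(u)(u-t)du, ∫_t^1 σ²(u)(u-t)²du]]. Then for every z ∈ ℝ and every t ∈ (0,1), ∫_{ℝ²} f_t(u,v)·f̂_{1-t}(u, z-v) du dv = f_1(0,z), where f_1 is the Gaussian density with covariance Σ_1. -/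
open Set

/-- Centered two-dimensional Gaussian density with covariance matrix `M`. -/
noncomputable def gauss2 (M : Matrix (Fin 2) (Fin 2) ℝ) (x y : ℝ) : ℝ :=
  (1 / (2 * Real.pi * Real.sqrt M.det)) *
    Real.exp (-(1 / 2) * dotProduct ![x, y] (Matrix.mulVec M⁻¹ ![x, y]))

open Real MeasureTheory

noncomputable def g1 (s x : ℝ) : ℝ := (Real.sqrt (2 * Real.pi * s))⁻¹ * Real.exp (-x ^ 2 / (2 * s))

lemma g1_nonneg (s x : ℝ) : 0 ≤ g1 s x := by
  unfold g1; positivity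

lemma g1_continuous (s : ℝ) : Continuous (g1 s) := by
  unfold g1; fun_prop

lemma g1_le (s : ℝ) (hs : 0 < s) (x : ℝ) : g1 s x ≤ (Real.sqrt (2 * Real.pi * s))⁻¹ := by
  unfold g1
  have h1 : Real.exp (-x ^ 2 / (2 * s)) ≤ 1 := by
    apply Real.exp_le_one_iff.2
    apply div_nonpos_of_nonpos_of_nonneg (by nlinarith [sq_nonneg x]) (by positivity)
  nlinarith [Real.sqrt_nonneg (2 * Real.pi * s), Real.exp_pos (-x ^ 2 / (2 * s)),
    inv_nonneg.2 (Real.sqrt_nonneg (2 * Real.pi * s))]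

lemma g1_eq (s : ℝ) : g1 s = fun x => (Real.sqrt (2 * Real.pi * s))⁻¹ * Real.exp (-((2*s)⁻¹) * x ^ 2) := by
  funext x
  unfold g1
  congr 1
  ring

lemma integrable_g1 {s : ℝ} (hs : 0 < s) : Integrable (g1 s) := by
  rw [g1_eq]
  exact (integrable_exp_neg_mul_sq (by positivity)).const_mul _


-- constant identity
example (a b : ℝ) (ha : 0 < a) (hb : 0 < b) :
    (Real.sqrt (2 * Real.pi * a))⁻¹ * (Real.sqrt (2 * Real.pi * b))⁻¹
      = (Real.sqrt (2 * Real.pi * (a + b)))⁻¹ * (Real.sqrt (Real.pi / ((a + b) / (2 * a * b))))⁻¹ := by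
  have hpi := Real.pi_pos
  rw [← mul_inv, ← mul_inv, ← Real.sqrt_mul (by positivity), ← Real.sqrt_mul (by positivity)]
  congr 2
  field_simp

lemma g1_conv {a b : ℝ} (ha : 0 < a) (hb : 0 < b) (w : ℝ) :
    ∫ x : ℝ, g1 a x * g1 b (w - x) = g1 (a + b) w := by
  have hpi := Real.pi_pos
  set k : ℝ := (a + b) / (2 * a * b) with hk
  have hk0 : 0 < k := by positivity
  set m : ℝ := a * w / (a + b) with hm
  have hab : (0:ℝ) < a + b := by linarith
  have hpik : Real.pi / k = 2 * Real.pi * a * b / (a + b) := by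
    rw [hk]; field_simp
  have hpt : ∀ x : ℝ, g1 a x * g1 b (w - x)
      = (g1 (a + b) w * (Real.sqrt (Real.pi / k))⁻¹) * Real.exp (-k * (x - m) ^ 2) := by
    intro x
    unfold g1
    rw [show ((Real.sqrt (2*Real.pi*a))⁻¹ * Real.exp (-x^2/(2*a))) * ((Real.sqrt (2*Real.pi*b))⁻¹ * Real.exp (-(w-x)^2/(2*b)))
        = ((Real.sqrt (2*Real.pi*a))⁻¹ * (Real.sqrt (2*Real.pi*b))⁻¹) * (Real.exp (-x^2/(2*a)) * Real.exp (-(w-x)^2/(2*b))) by ring]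
    rw [← Real.exp_add]
    rw [show ((Real.sqrt (2*Real.pi*(a+b)))⁻¹ * Real.exp (-w^2/(2*(a+b))) * (Real.sqrt (Real.pi / k))⁻¹) * Real.exp (-k*(x-m)^2)
        = ((Real.sqrt (2*Real.pi*(a+b)))⁻¹ * (Real.sqrt (Real.pi / k))⁻¹) * (Real.exp (-w^2/(2*(a+b))) * Real.exp (-k*(x-m)^2)) by ring]
    rw [← Real.exp_add]
    congr 1
    · rw [← mul_inv, ← mul_inv, ← Real.sqrt_mul (by positivity), ← Real.sqrt_mul (by positivity)]
      rw [hpik]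
      congr 2
      field_simp
    · congr 1
      rw [hk, hm]
      field_simp [ha.ne', hb.ne']
      ring
  simp_rw [hpt]
  rw [MeasureTheory.integral_const_mul]
  have hshift : ∫ x : ℝ, Real.exp (-k * (x - m) ^ 2) = ∫ x : ℝ, Real.exp (-k * x ^ 2) :=
    MeasureTheory.integral_sub_right_eq_self (fun x => Real.exp (-k * x ^ 2)) m
  rw [hshift, integral_gaussian]
  have : (Real.sqrt (Real.pi / k))⁻¹ * Real.sqrt (Real.pi / k) = 1 := by
    rw [inv_mul_cancel₀]
    positivity
  rw [mul_assoc, this, mul_one]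

lemma g1_conv' {a b : ℝ} (ha : 0 < a) (hb : 0 < b) (w m : ℝ) :
    ∫ x : ℝ, g1 a (x - m) * g1 b (w - x) = g1 (a + b) (w - m) := by
  have h := MeasureTheory.integral_add_right_eq_self (μ := volume) (fun x => g1 a (x - m) * g1 b (w - x)) m
  rw [← h]
  simp only [add_sub_cancel_right]
  have : ∀ x : ℝ, w - (x + m) = (w - m) - x := by intro x; ring
  simp_rw [this]
  exact g1_conv ha hb (w - m)

lemma g1_scale {γ : ℝ} (hγ : γ ≠ 0) (h u : ℝ) :
    g1 (γ ^ 2 * h) (γ * u) = |γ|⁻¹ * g1 h u := by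
  unfold g1
  have h1 : Real.sqrt (2 * Real.pi * (γ ^ 2 * h)) = |γ| * Real.sqrt (2 * Real.pi * h) := by
    rw [show 2 * Real.pi * (γ ^ 2 * h) = γ ^ 2 * (2 * Real.pi * h) by ring,
      Real.sqrt_mul (sq_nonneg γ), Real.sqrt_sq_eq_abs]
  rw [h1, mul_inv]
  have h2 : -(γ * u) ^ 2 / (2 * (γ ^ 2 * h)) = -u ^ 2 / (2 * h) := by
    rcases eq_or_ne h 0 with rfl | hh
    · simp
    · field_simp
  rw [h2]
  ring

lemma g1_conv_scaled {h D γ : ℝ} (hh : 0 < h) (hD : 0 < D) (hγ : γ ≠ 0) (z : ℝ) :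
    ∫ u : ℝ, g1 h u * g1 D (z - γ * u) = g1 (γ ^ 2 * h + D) z := by
  have hpt : ∀ u : ℝ, g1 h u * g1 D (z - γ * u)
      = |γ| * (g1 (γ ^ 2 * h) (γ * u) * g1 D (z - γ * u)) := by
    intro u
    rw [g1_scale hγ]
    rw [show |γ| * (|γ|⁻¹ * g1 h u * g1 D (z - γ * u)) = (|γ| * |γ|⁻¹) * (g1 h u * g1 D (z - γ * u)) by ring,
      mul_inv_cancel₀ (abs_ne_zero.2 hγ), one_mul]
  simp_rw [hpt]
  rw [MeasureTheory.integral_const_mul]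
  have := MeasureTheory.Measure.integral_comp_mul_left (fun x => g1 (γ ^ 2 * h) x * g1 D (z - x)) γ
  rw [this, g1_conv (by positivity) hD z, smul_eq_mul, abs_inv]
  rw [← mul_assoc, mul_inv_cancel₀ (abs_ne_zero.2 hγ), one_mul]

lemma g1_mul_self {a b : ℝ} (ha : 0 < a) (hb : 0 < b) (x : ℝ) :
    g1 a x * g1 b x = g1 (a + b) 0 * g1 (a * b / (a + b)) x := by
  have hpi := Real.pi_pos
  have hab : (0:ℝ) < a + b := by linarith
  unfold g1
  rw [show (-(0:ℝ)^2/(2*(a+b))) = 0 by norm_num, Real.exp_zero, mul_one]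
  rw [show ((Real.sqrt (2*Real.pi*a))⁻¹ * Real.exp (-x^2/(2*a))) * ((Real.sqrt (2*Real.pi*b))⁻¹ * Real.exp (-x^2/(2*b)))
      = ((Real.sqrt (2*Real.pi*a))⁻¹ * (Real.sqrt (2*Real.pi*b))⁻¹) * (Real.exp (-x^2/(2*a)) * Real.exp (-x^2/(2*b))) by ring,
    ← Real.exp_add,
    show (Real.sqrt (2*Real.pi*(a+b)))⁻¹ * ((Real.sqrt (2*Real.pi*(a*b/(a+b))))⁻¹ * Real.exp (-x^2/(2*(a*b/(a+b)))))
      = ((Real.sqrt (2*Real.pi*(a+b)))⁻¹ * (Real.sqrt (2*Real.pi*(a*b/(a+b))))⁻¹) * Real.exp (-x^2/(2*(a*b/(a+b)))) by ring]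
  congr 1
  · rw [← mul_inv, ← mul_inv, ← Real.sqrt_mul (by positivity), ← Real.sqrt_mul (by positivity)]
    congr 2
    field_simp
  · congr 1
    field_simp
    ring



lemma gauss2_eq (a b c x y : ℝ) (h : a * c - b ^ 2 ≠ 0) :
    gauss2 !![a, b; b, c] x y
      = (2 * Real.pi * Real.sqrt (a * c - b ^ 2))⁻¹
        * Real.exp (-((c * x ^ 2 - 2 * b * x * y + a * y ^ 2) / (2 * (a * c - b ^ 2)))) := by
  have hdet : (!![a, b; b, c] : Matrix (Fin 2) (Fin 2) ℝ).det = a * c - b ^ 2 := by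
    simp [Matrix.det_fin_two_of]; ring
  unfold gauss2
  rw [Matrix.inv_def, Matrix.adjugate_fin_two_of, hdet, Ring.inverse_eq_inv']
  congr 1
  · rw [one_div]
  · simp [Matrix.mulVec, dotProduct, Fin.sum_univ_two, Matrix.smul_apply]
    field_simp
    ring

lemma gauss2_decomp {a b c : ℝ} (ha : 0 < a) (hd : 0 < a * c - b ^ 2) (x y : ℝ) :
    gauss2 !![a, b; b, c] x y = g1 a x * g1 ((a * c - b ^ 2) / a) (y - b / a * x) := by
  have hpi := Real.pi_pos
  rw [gauss2_eq a b c x y hd.ne']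
  unfold g1
  rw [show ((Real.sqrt (2*Real.pi*a))⁻¹ * Real.exp (-x^2/(2*a))) * ((Real.sqrt (2*Real.pi*((a*c-b^2)/a)))⁻¹ * Real.exp (-(y - b/a*x)^2/(2*((a*c-b^2)/a))))
      = ((Real.sqrt (2*Real.pi*a))⁻¹ * (Real.sqrt (2*Real.pi*((a*c-b^2)/a)))⁻¹) * (Real.exp (-x^2/(2*a)) * Real.exp (-(y - b/a*x)^2/(2*((a*c-b^2)/a)))) by ring,
    ← Real.exp_add]
  congr 1
  · rw [← mul_inv, ← Real.sqrt_mul (by positivity), show (2*Real.pi*Real.sqrt (a*c-b^2)) = Real.sqrt ((2*Real.pi)^2 * (a*c-b^2)) by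
      rw [Real.sqrt_mul (by positivity), Real.sqrt_sq (by positivity)]]
    congr 1
    field_simp
  · congr 1
    field_simp
    linear_combination (-x ^ 2) * mul_inv_cancel₀ hd.ne'

lemma gauss2_zero_ext (M N : Matrix (Fin 2) (Fin 2) ℝ) (h00 : M 0 0 = N 0 0)
    (hdet : M.det = N.det) (z : ℝ) : gauss2 M 0 z = gauss2 N 0 z := by
  unfold gauss2
  rw [Matrix.inv_def, Matrix.inv_def, Matrix.adjugate_fin_two, Matrix.adjugate_fin_two]
  simp only [Matrix.mulVec, dotProduct, Fin.sum_univ_two, Matrix.smul_apply,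
    Matrix.cons_val', Matrix.cons_val_zero, Matrix.cons_val_one, Matrix.head_cons,
    Matrix.empty_val', Matrix.cons_val_fin_one, Matrix.head_fin_const, Matrix.of_apply,
    smul_eq_mul]
  rw [h00, hdet]
  ring_nf

lemma master {a₁ b₁ c₁ a₂ b₂ c₂ : ℝ} (ha₁ : 0 < a₁) (hb₁ : 0 < b₁) (h₁ : 0 < a₁*c₁ - b₁^2)
    (ha₂ : 0 < a₂) (hb₂ : 0 < b₂) (h₂ : 0 < a₂*c₂ - b₂^2) (z : ℝ) :
    ∫ p : ℝ × ℝ, gauss2 !![a₁,b₁;b₁,c₁] p.1 p.2 * gauss2 !![a₂,b₂;b₂,c₂] p.1 (z - p.2)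
      = gauss2 !![a₁+a₂, b₁-b₂; b₁-b₂, c₁+c₂] 0 z := by
  have hpi := Real.pi_pos
  set d₁ := (a₁*c₁ - b₁^2)/a₁ with hd₁def
  set d₂ := (a₂*c₂ - b₂^2)/a₂ with hd₂def
  set β₁ := b₁/a₁ with hβ₁def
  set β₂ := b₂/a₂ with hβ₂def
  have hd₁ : 0 < d₁ := div_pos h₁ ha₁
  have hd₂ : 0 < d₂ := div_pos h₂ ha₂
  have hγ : 0 < β₁ + β₂ := by
    have : 0 < β₁ := div_pos hb₁ ha₁
    have : 0 < β₂ := div_pos hb₂ ha₂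
    linarith
  set F : ℝ → ℝ → ℝ := fun u v => (g1 a₁ u * g1 d₁ (v - β₁*u)) * (g1 a₂ u * g1 d₂ ((z - v) - β₂*u)) with hF
  have hpt : ∀ p : ℝ × ℝ, gauss2 !![a₁,b₁;b₁,c₁] p.1 p.2 * gauss2 !![a₂,b₂;b₂,c₂] p.1 (z - p.2) = F p.1 p.2 := by
    intro p
    rw [gauss2_decomp ha₁ h₁, gauss2_decomp ha₂ h₂]
  have hinner : ∀ u : ℝ, ∫ v, F u v = (g1 a₁ u * g1 a₂ u) * g1 (d₁+d₂) (z - (β₁+β₂)*u) := by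
    intro u
    have hre : ∀ v, F u v = (g1 a₁ u * g1 a₂ u) * (g1 d₁ (v - β₁*u) * g1 d₂ ((z - β₂*u) - v)) := by
      intro v
      show (g1 a₁ u * g1 d₁ (v - β₁*u)) * (g1 a₂ u * g1 d₂ ((z - v) - β₂*u)) = _
      rw [show (z - v) - β₂*u = (z - β₂*u) - v by ring]
      ring
    simp_rw [hre]
    rw [MeasureTheory.integral_const_mul, g1_conv' hd₁ hd₂ (z - β₂*u) (β₁*u),
        show (z - β₂*u) - β₁*u = z - (β₁+β₂)*u by ring]
  have hFc : Continuous (fun p : ℝ × ℝ => F p.1 p.2) := by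
    rw [hF]
    unfold g1
    fun_prop
  have hFnn : ∀ u v, 0 ≤ F u v := by
    intro u v
    exact mul_nonneg (mul_nonneg (g1_nonneg _ _) (g1_nonneg _ _))
      (mul_nonneg (g1_nonneg _ _) (g1_nonneg _ _))
  have hInt : Integrable (fun p : ℝ × ℝ => F p.1 p.2) volume := by
    rw [MeasureTheory.Measure.volume_eq_prod]
    refine (MeasureTheory.integrable_prod_iff hFc.aestronglyMeasurable).2 ⟨?_, ?_⟩
    · refine Filter.Eventually.of_forall (fun u => ?_)
      have hbound : Integrable (fun v : ℝ =>
          (g1 a₁ u * g1 a₂ u * (Real.sqrt (2*Real.pi*d₂))⁻¹) * g1 d₁ (v - β₁*u)) volume :=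
        ((integrable_g1 hd₁).comp_sub_right (β₁*u)).const_mul _
      refine hbound.mono' ?_ ?_
      · exact (hFc.comp (Continuous.prodMk_right u)).aestronglyMeasurable
      · refine Filter.Eventually.of_forall (fun v => ?_)
        rw [Real.norm_of_nonneg (hFnn u v)]
        calc F u v = (g1 a₁ u * g1 d₁ (v - β₁*u) * g1 a₂ u) * g1 d₂ ((z - v) - β₂*u) := by
              show (g1 a₁ u * g1 d₁ (v - β₁*u)) * (g1 a₂ u * g1 d₂ ((z - v) - β₂*u)) = _
              ring
          _ ≤ (g1 a₁ u * g1 d₁ (v - β₁*u) * g1 a₂ u) * (Real.sqrt (2*Real.pi*d₂))⁻¹ := by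
              refine mul_le_mul_of_nonneg_left (g1_le d₂ hd₂ _) ?_
              exact mul_nonneg (mul_nonneg (g1_nonneg _ _) (g1_nonneg _ _)) (g1_nonneg _ _)
          _ = g1 a₁ u * g1 a₂ u * (Real.sqrt (2*Real.pi*d₂))⁻¹ * g1 d₁ (v - β₁*u) := by ring
    · have heq : (fun u => ∫ v, ‖F u v‖) = fun u => (g1 a₁ u * g1 a₂ u) * g1 (d₁+d₂) (z - (β₁+β₂)*u) := by
        funext u
        rw [← hinner u]
        congr 1
        funext v
        exact Real.norm_of_nonneg (hFnn u v)
      rw [heq]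
      have hDD : 0 < d₁ + d₂ := by linarith
      have hbound : Integrable (fun u : ℝ =>
          ((Real.sqrt (2*Real.pi*a₂))⁻¹ * (Real.sqrt (2*Real.pi*(d₁+d₂)))⁻¹) * g1 a₁ u) volume :=
        (integrable_g1 ha₁).const_mul _
      refine hbound.mono' ?_ ?_
      · have : Continuous (fun u : ℝ => (g1 a₁ u * g1 a₂ u) * g1 (d₁+d₂) (z - (β₁+β₂)*u)) := by
          unfold g1; fun_prop
        exact this.aestronglyMeasurable
      · refine Filter.Eventually.of_forall (fun u => ?_)
        have hnn : 0 ≤ (g1 a₁ u * g1 a₂ u) * g1 (d₁+d₂) (z - (β₁+β₂)*u) :=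
          mul_nonneg (mul_nonneg (g1_nonneg _ _) (g1_nonneg _ _)) (g1_nonneg _ _)
        rw [Real.norm_of_nonneg hnn]
        calc (g1 a₁ u * g1 a₂ u) * g1 (d₁+d₂) (z - (β₁+β₂)*u)
            ≤ (g1 a₁ u * g1 a₂ u) * (Real.sqrt (2*Real.pi*(d₁+d₂)))⁻¹ := by
              refine mul_le_mul_of_nonneg_left (g1_le _ hDD _) ?_
              exact mul_nonneg (g1_nonneg _ _) (g1_nonneg _ _)
          _ ≤ (g1 a₁ u * (Real.sqrt (2*Real.pi*a₂))⁻¹) * (Real.sqrt (2*Real.pi*(d₁+d₂)))⁻¹ := by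
              refine mul_le_mul_of_nonneg_right ?_ (by positivity)
              exact mul_le_mul_of_nonneg_left (g1_le _ ha₂ _) (g1_nonneg _ _)
          _ = (Real.sqrt (2*Real.pi*a₂))⁻¹ * (Real.sqrt (2*Real.pi*(d₁+d₂)))⁻¹ * g1 a₁ u := by ring
  -- compute
  have hAB : (0:ℝ) < a₁ + a₂ := by linarith
  have hh : 0 < a₁*a₂/(a₁+a₂) := by positivity
  have hDD : 0 < d₁ + d₂ := by linarith
  have hdetS : 0 < (a₁+a₂)*(c₁+c₂) - (b₁-b₂)^2 := by
    have hkey : (a₁+a₂)*(c₁+c₂) - (b₁-b₂)^2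
        = (a₁+a₂)*((β₁+β₂)^2*(a₁*a₂/(a₁+a₂)) + (d₁+d₂)) := by
      rw [hβ₁def, hβ₂def, hd₁def, hd₂def]
      field_simp
      ring
    rw [hkey]
    positivity
  calc ∫ p : ℝ × ℝ, gauss2 !![a₁,b₁;b₁,c₁] p.1 p.2 * gauss2 !![a₂,b₂;b₂,c₂] p.1 (z - p.2)
      = ∫ p : ℝ × ℝ, F p.1 p.2 := MeasureTheory.integral_congr_ae (Filter.Eventually.of_forall hpt)
    _ = ∫ u : ℝ, ∫ v : ℝ, F u v := by
        rw [MeasureTheory.Measure.volume_eq_prod] at hInt ⊢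
        exact MeasureTheory.integral_prod _ hInt
    _ = ∫ u : ℝ, (g1 a₁ u * g1 a₂ u) * g1 (d₁+d₂) (z - (β₁+β₂)*u) := by simp_rw [hinner]
    _ = ∫ u : ℝ, g1 (a₁+a₂) 0 * (g1 (a₁*a₂/(a₁+a₂)) u * g1 (d₁+d₂) (z - (β₁+β₂)*u)) := by
        simp_rw [g1_mul_self ha₁ ha₂, mul_assoc]
    _ = g1 (a₁+a₂) 0 * g1 ((β₁+β₂)^2*(a₁*a₂/(a₁+a₂)) + (d₁+d₂)) z := by
        rw [MeasureTheory.integral_const_mul, g1_conv_scaled hh hDD hγ.ne' z]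
    _ = gauss2 !![a₁+a₂, b₁-b₂; b₁-b₂, c₁+c₂] 0 z := by
        rw [gauss2_decomp hAB hdetS 0 z]
        rw [show z - (b₁-b₂)/(a₁+a₂)*0 = z by ring]
        congr 2
        rw [hβ₁def, hβ₂def, hd₁def, hd₂def]
        field_simp
        ring

-- strict positivity of the "variance" determinant
lemma det_pos_aux {f w : ℝ → ℝ} {a b : ℝ} (hab : a < b)
    (hf : ContinuousOn f (Icc a b)) (hfpos : ∀ u ∈ Icc a b, 0 < f u)
    (hw : Continuous w) (hinj : Function.Injective w) :
    0 < (∫ u in a..b, f u) * (∫ u in a..b, f u * w u ^ 2) - (∫ u in a..b, f u * w u) ^ 2 := by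
  have hIccf : ∀ (g : ℝ → ℝ), Continuous g → ∀ x y, x ∈ Icc a b → y ∈ Icc a b →
      IntervalIntegrable (fun u => f u * g u) volume x y := by
    intro g hg x y hx hy
    apply ContinuousOn.intervalIntegrable
    exact (hf.mono (uIcc_subset_Icc hx hy)).mul hg.continuousOn
  have haI : a ∈ Icc a b := ⟨le_refl a, hab.le⟩
  have hbI : b ∈ Icc a b := ⟨hab.le, le_refl b⟩
  set P0 := ∫ u in a..b, f u with hP0def
  set P1 := ∫ u in a..b, f u * w u with hP1def
  set P2 := ∫ u in a..b, f u * w u ^ 2 with hP2def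
  have hP0 : 0 < P0 := by
    apply intervalIntegral.intervalIntegral_pos_of_pos_on _ _ hab
    · have := hIccf (fun _ => 1) continuous_const a b haI hbI
      simpa using this
    · intro x hx
      exact hfpos x ⟨hx.1.le, hx.2.le⟩
  set r := P1 / P0 with hrdef
  -- positivity of ∫ f (w - r)^2
  set m := (a + b) / 2 with hmdef
  have ham : a < m := by rw [hmdef]; linarith
  have hmb : m < b := by rw [hmdef]; linarith
  have hmI : m ∈ Icc a b := ⟨ham.le, hmb.le⟩
  have key : 0 < ∫ u in a..b, f u * (w u - r) ^ 2 := by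
    have hsplit : (∫ u in a..m, f u * (w u - r) ^ 2) + (∫ u in m..b, f u * (w u - r) ^ 2)
        = ∫ u in a..b, f u * (w u - r) ^ 2 := by
      apply intervalIntegral.integral_add_adjacent_intervals
      · exact hIccf _ (by fun_prop) a m haI hmI
      · exact hIccf _ (by fun_prop) m b hmI hbI
    rw [← hsplit]
    by_cases hc : ∃ u ∈ Ioo a m, w u = r
    · obtain ⟨u₀, hu₀, hwu₀⟩ := hc
      have hpos2 : 0 < ∫ u in m..b, f u * (w u - r) ^ 2 := by
        apply intervalIntegral.intervalIntegral_pos_of_pos_on (hIccf _ (by fun_prop) m b hmI hbI) _ hmb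
        intro x hx
        have hxI : x ∈ Icc a b := ⟨le_trans ham.le hx.1.le, hx.2.le⟩
        have hne : w x ≠ r := by
          intro h
          have : x = u₀ := hinj (h.trans hwu₀.symm)
          rw [this] at hx
          exact absurd hu₀.2 (not_lt.2 hx.1.le)
        have hs : w x - r ≠ 0 := sub_ne_zero.2 hne
        exact mul_pos (hfpos x hxI) (by positivity)
      have hnn : 0 ≤ ∫ u in a..m, f u * (w u - r) ^ 2 := by
        apply intervalIntegral.integral_nonneg ham.le
        intro x hx
        exact mul_nonneg (hfpos x ⟨hx.1, le_trans hx.2 hmb.le⟩).le (sq_nonneg _)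
      linarith
    · push_neg at hc
      have hpos1 : 0 < ∫ u in a..m, f u * (w u - r) ^ 2 := by
        apply intervalIntegral.intervalIntegral_pos_of_pos_on (hIccf _ (by fun_prop) a m haI hmI) _ ham
        intro x hx
        have hxI : x ∈ Icc a b := ⟨hx.1.le, le_trans hx.2.le hmb.le⟩
        have hne : w x - r ≠ 0 := sub_ne_zero.2 (hc x hx)
        exact mul_pos (hfpos x hxI) (by positivity)
      have hnn : 0 ≤ ∫ u in m..b, f u * (w u - r) ^ 2 := by
        apply intervalIntegral.integral_nonneg hmb.le
        intro x hx
        exact mul_nonneg (hfpos x ⟨le_trans ham.le hx.1, hx.2⟩).le (sq_nonneg _)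
      linarith
  have hfw : IntervalIntegrable (fun u => f u * w u) volume a b := hIccf _ hw a b haI hbI
  have hfw2 : IntervalIntegrable (fun u => f u * w u ^ 2) volume a b :=
    hIccf _ (by fun_prop) a b haI hbI
  have hfo : IntervalIntegrable f volume a b := by
    have := hIccf (fun _ => 1) continuous_const a b haI hbI
    simpa using this
  have hexp : (∫ u in a..b, f u * (w u - r) ^ 2) = P2 - 2 * r * P1 + r ^ 2 * P0 := by
    have h1 : (∫ u in a..b, f u * (w u - r) ^ 2)
        = ∫ u in a..b, ((f u * w u ^ 2 - 2 * r * (f u * w u)) + r ^ 2 * f u) := by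
      apply intervalIntegral.integral_congr
      intro x _
      ring
    rw [h1, intervalIntegral.integral_add (hfw2.sub (hfw.const_mul (2*r))) (hfo.const_mul (r^2)),
      intervalIntegral.integral_sub hfw2 (hfw.const_mul (2*r)),
      intervalIntegral.integral_const_mul, intervalIntegral.integral_const_mul]
  rw [hexp] at key
  have hPP : P0 * (P2 - 2 * r * P1 + r ^ 2 * P0) = P0 * P2 - P1 ^ 2 := by
    rw [hrdef]
    field_simp
    ring
  nlinarith [mul_pos hP0 key, hPP]


/-- Covariance matrix of `(ξ(t), ∫₀ᵗ ξ)`. -/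
noncomputable def covMat (σ2 : ℝ → ℝ) (t : ℝ) : Matrix (Fin 2) (Fin 2) ℝ :=
  !![∫ u in (0:ℝ)..t, σ2 u, ∫ u in (0:ℝ)..t, σ2 u * (t - u);
     ∫ u in (0:ℝ)..t, σ2 u * (t - u), ∫ u in (0:ℝ)..t, σ2 u * (t - u) ^ 2]

/-- Covariance matrix for the time-reversed process. -/
noncomputable def covMatHat (σ2 : ℝ → ℝ) (t : ℝ) : Matrix (Fin 2) (Fin 2) ℝ :=
  !![∫ u in t..(1:ℝ), σ2 u, ∫ u in t..(1:ℝ), σ2 u * (u - t);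
     ∫ u in t..(1:ℝ), σ2 u * (u - t), ∫ u in t..(1:ℝ), σ2 u * (u - t) ^ 2]

theorem gaussian_convolution_identity (σ2 : ℝ → ℝ)
    (hcont : ContinuousOn σ2 (Icc 0 1)) (hpos : ∀ u ∈ Icc (0:ℝ) 1, 0 < σ2 u)
    (t : ℝ) (ht : t ∈ Ioo (0:ℝ) 1) (z : ℝ) :
    ∫ p : ℝ × ℝ, gauss2 (covMat σ2 t) p.1 p.2 * gauss2 (covMatHat σ2 t) p.1 (z - p.2)
      = gauss2 (covMat σ2 1) 0 z := by
  obtain ⟨ht0, ht1⟩ := ht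
  have h0I : (0:ℝ) ∈ Icc (0:ℝ) 1 := ⟨le_refl 0, by norm_num⟩
  have h1I : (1:ℝ) ∈ Icc (0:ℝ) 1 := ⟨by norm_num, le_refl 1⟩
  have htI : t ∈ Icc (0:ℝ) 1 := ⟨ht0.le, ht1.le⟩
  have hII : ∀ (g : ℝ → ℝ), Continuous g → ∀ x y : ℝ, x ∈ Icc (0:ℝ) 1 → y ∈ Icc (0:ℝ) 1 →
      IntervalIntegrable (fun u => σ2 u * g u) volume x y := fun g hg x y hx hy =>
    ((hcont.mono (uIcc_subset_Icc hx hy)).mul hg.continuousOn).intervalIntegrable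
  have hI0 : ∀ x y : ℝ, x ∈ Icc (0:ℝ) 1 → y ∈ Icc (0:ℝ) 1 →
      IntervalIntegrable σ2 volume x y := fun x y hx hy =>
    ((hcont.mono (uIcc_subset_Icc hx hy))).intervalIntegrable
  set p₀ := ∫ u in (0:ℝ)..t, σ2 u with hp₀def
  set p₁ := ∫ u in (0:ℝ)..t, σ2 u * (t - u) with hp₁def
  set p₂ := ∫ u in (0:ℝ)..t, σ2 u * (t - u) ^ 2 with hp₂def
  set q₀ := ∫ u in t..(1:ℝ), σ2 u with hq₀def
  set q₁ := ∫ u in t..(1:ℝ), σ2 u * (u - t) with hq₁def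
  set q₂ := ∫ u in t..(1:ℝ), σ2 u * (u - t) ^ 2 with hq₂def
  -- positivity
  have hp₀ : 0 < p₀ := by
    apply intervalIntegral.intervalIntegral_pos_of_pos_on (hI0 0 t h0I htI) _ ht0
    intro x hx
    exact hpos x ⟨hx.1.le, hx.2.le.trans ht1.le⟩
  have hq₀ : 0 < q₀ := by
    apply intervalIntegral.intervalIntegral_pos_of_pos_on (hI0 t 1 htI h1I) _ ht1
    intro x hx
    exact hpos x ⟨ht0.le.trans hx.1.le, hx.2.le⟩
  have hp₁ : 0 < p₁ := by
    apply intervalIntegral.intervalIntegral_pos_of_pos_on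
      (hII (fun u => t - u) (by fun_prop) 0 t h0I htI) _ ht0
    intro x hx
    have h1 : 0 < σ2 x := hpos x ⟨hx.1.le, hx.2.le.trans ht1.le⟩
    have h2 : 0 < t - x := by linarith [hx.2]
    positivity
  have hq₁ : 0 < q₁ := by
    apply intervalIntegral.intervalIntegral_pos_of_pos_on
      (hII (fun u => u - t) (by fun_prop) t 1 htI h1I) _ ht1
    intro x hx
    have h1 : 0 < σ2 x := hpos x ⟨ht0.le.trans hx.1.le, hx.2.le⟩
    have h2 : 0 < x - t := by linarith [hx.1]
    positivity
  have hdp : 0 < p₀ * p₂ - p₁ ^ 2 := by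
    have := det_pos_aux (f := σ2) (w := fun u => t - u) ht0
      (hcont.mono (Icc_subset_Icc (le_refl 0) ht1.le))
      (fun u hu => hpos u ⟨hu.1, hu.2.trans ht1.le⟩)
      (by fun_prop) (fun x y hxy => by simpa using hxy : Function.Injective (fun u : ℝ => t - u))
    exact this
  have hdq : 0 < q₀ * q₂ - q₁ ^ 2 := by
    have := det_pos_aux (f := σ2) (w := fun u => u - t) ht1
      (hcont.mono (Icc_subset_Icc ht0.le (le_refl 1)))
      (fun u hu => hpos u ⟨ht0.le.trans hu.1, hu.2⟩)
      (by fun_prop) (fun x y hxy => by simpa using hxy : Function.Injective (fun u : ℝ => u - t))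
    exact this
  -- integral identities
  have I00 : p₀ + q₀ = ∫ u in (0:ℝ)..1, σ2 u :=
    intervalIntegral.integral_add_adjacent_intervals (hI0 0 t h0I htI) (hI0 t 1 htI h1I)
  have e1 : (∫ u in (0:ℝ)..t, σ2 u * (1 - u)) = (1 - t) * p₀ + p₁ := by
    have h : (∫ u in (0:ℝ)..t, σ2 u * (1 - u))
        = ∫ u in (0:ℝ)..t, ((1 - t) * σ2 u + σ2 u * (t - u)) :=
      intervalIntegral.integral_congr (fun u _ => by ring)
    rw [h, intervalIntegral.integral_add ((hI0 0 t h0I htI).const_mul _)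
      (hII _ (by fun_prop) 0 t h0I htI), intervalIntegral.integral_const_mul]
  have e2 : (∫ u in t..(1:ℝ), σ2 u * (1 - u)) = (1 - t) * q₀ - q₁ := by
    have h : (∫ u in t..(1:ℝ), σ2 u * (1 - u))
        = ∫ u in t..(1:ℝ), ((1 - t) * σ2 u - σ2 u * (u - t)) :=
      intervalIntegral.integral_congr (fun u _ => by ring)
    rw [h, intervalIntegral.integral_sub ((hI0 t 1 htI h1I).const_mul _)
      (hII _ (by fun_prop) t 1 htI h1I), intervalIntegral.integral_const_mul]
  have I01 : (∫ u in (0:ℝ)..1, σ2 u * (1 - u)) = (1 - t) * (p₀ + q₀) + (p₁ - q₁) := by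
    rw [← intervalIntegral.integral_add_adjacent_intervals
      (hII (fun u => 1 - u) (by fun_prop) 0 t h0I htI)
      (hII (fun u => 1 - u) (by fun_prop) t 1 htI h1I), e1, e2]
    ring
  have e3 : (∫ u in (0:ℝ)..t, σ2 u * (1 - u) ^ 2)
      = (1 - t) ^ 2 * p₀ + 2 * (1 - t) * p₁ + p₂ := by
    have h : (∫ u in (0:ℝ)..t, σ2 u * (1 - u) ^ 2)
        = ∫ u in (0:ℝ)..t, (((1 - t) ^ 2 * σ2 u + (2 * (1 - t)) * (σ2 u * (t - u)))
            + σ2 u * (t - u) ^ 2) :=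
      intervalIntegral.integral_congr (fun u _ => by ring)
    rw [h, intervalIntegral.integral_add
        (((hI0 0 t h0I htI).const_mul _).add ((hII _ (by fun_prop) 0 t h0I htI).const_mul _))
        (hII _ (by fun_prop) 0 t h0I htI),
      intervalIntegral.integral_add ((hI0 0 t h0I htI).const_mul _)
        ((hII _ (by fun_prop) 0 t h0I htI).const_mul _),
      intervalIntegral.integral_const_mul, intervalIntegral.integral_const_mul]
  have e4 : (∫ u in t..(1:ℝ), σ2 u * (1 - u) ^ 2)
      = (1 - t) ^ 2 * q₀ - 2 * (1 - t) * q₁ + q₂ := by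
    have h : (∫ u in t..(1:ℝ), σ2 u * (1 - u) ^ 2)
        = ∫ u in t..(1:ℝ), (((1 - t) ^ 2 * σ2 u - (2 * (1 - t)) * (σ2 u * (u - t)))
            + σ2 u * (u - t) ^ 2) :=
      intervalIntegral.integral_congr (fun u _ => by ring)
    rw [h, intervalIntegral.integral_add
        (((hI0 t 1 htI h1I).const_mul _).sub ((hII _ (by fun_prop) t 1 htI h1I).const_mul _))
        (hII _ (by fun_prop) t 1 htI h1I),
      intervalIntegral.integral_sub ((hI0 t 1 htI h1I).const_mul _)
        ((hII _ (by fun_prop) t 1 htI h1I).const_mul _),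
      intervalIntegral.integral_const_mul, intervalIntegral.integral_const_mul]
  have I11 : (∫ u in (0:ℝ)..1, σ2 u * (1 - u) ^ 2)
      = (1 - t) ^ 2 * (p₀ + q₀) + 2 * (1 - t) * (p₁ - q₁) + (p₂ + q₂) := by
    rw [← intervalIntegral.integral_add_adjacent_intervals
      (hII (fun u => (1 - u) ^ 2) (by fun_prop) 0 t h0I htI)
      (hII (fun u => (1 - u) ^ 2) (by fun_prop) t 1 htI h1I), e3, e4]
    ring
  -- main computation
  rw [show covMat σ2 t = !![p₀, p₁; p₁, p₂] from rfl,
    show covMatHat σ2 t = !![q₀, q₁; q₁, q₂] from rfl,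
    master hp₀ hp₁ hdp hq₀ hq₁ hdq z]
  apply gauss2_zero_ext
  · show p₀ + q₀ = covMat σ2 1 0 0
    rw [show covMat σ2 1 0 0 = ∫ u in (0:ℝ)..1, σ2 u from by simp [covMat]]
    exact I00
  · rw [show covMat σ2 1 = !![∫ u in (0:ℝ)..1, σ2 u, ∫ u in (0:ℝ)..1, σ2 u * (1 - u);
        ∫ u in (0:ℝ)..1, σ2 u * (1 - u), ∫ u in (0:ℝ)..1, σ2 u * (1 - u) ^ 2] from rfl,
      Matrix.det_fin_two_of, Matrix.det_fin_two_of, ← I00, I01, I11]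
    ring
end
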